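/- Let p ≠ 5 be a prime, q = pʳ, and S ⊂ ℙ³ the Fermat quintic surface {x₀⁵ + x₁⁵ − x₃⁵ − x₄⁵ = 0} over F_q. Then #S(F_q) ≡ 1 + q + q² (mod 4). -/

import Mathlib

open Projectivization
open scoped LinearAlgebra.Projectivization

namespace FQaux

theorem card_mod_four_eq {X : Type*} [Fintype X] [DecidableEq X] (f : X → X)
    (h4 : ∀ x, f (f (f (f x))) = x) :
    Fintype.card X % 4 = (Finset.univ.filter fun x => f (f x) = x).card % 4 := by
  have finj : Function.Injective f :=
    Function.LeftInverse.injective (g := fun x => f (f (f x))) h4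
  suffices H : ∀ n (s : Finset X), s.card ≤ n → (∀ x ∈ s, f x ∈ s) →
      s.card % 4 = (s.filter fun x => f (f x) = x).card % 4 by
    exact H (Finset.univ.card) Finset.univ le_rfl (by simp)
  intro n
  induction n with
  | zero =>
    intro s hs _
    have : s = ∅ := Finset.card_eq_zero.mp (Nat.le_zero.mp hs)
    subst this; simp
  | succ n ih =>
    intro s hsn hcl
    by_cases hall : ∀ x ∈ s, f (f x) = x
    · rw [Finset.filter_true_of_mem hall]
    · push_neg at hall
      obtain ⟨x, hxs, hx⟩ := hall
      -- distinctness of the orbit elements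
      have d01 : x ≠ f x := fun h => hx (by rw [← h, ← h])
      have d02 : x ≠ f (f x) := hx ∘ Eq.symm
      have d03 : x ≠ f (f (f x)) := by
        intro h
        have hfx : f x = x := by conv_lhs => rw [h, h4]
        exact d01 hfx.symm
      have d12 : f x ≠ f (f x) := fun h => d01 (finj h)
      have d13 : f x ≠ f (f (f x)) := fun h => d02 (finj h)
      have d23 : f (f x) ≠ f (f (f x)) := fun h => d12 (finj h)
      set O : Finset X := {x, f x, f (f x), f (f (f x))} with hO
      have hOcard : O.card = 4 := by
        rw [hO]
        rw [Finset.card_insert_of_notMem (by simp [d01, d02, d03]),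
          Finset.card_insert_of_notMem (by simp [d12, d13]),
          Finset.card_insert_of_notMem (by simp [d23]),
          Finset.card_singleton]
      have hOsub : O ⊆ s := by
        intro y hy
        simp only [hO, Finset.mem_insert, Finset.mem_singleton] at hy
        rcases hy with rfl | rfl | rfl | rfl
        · exact hxs
        · exact hcl _ hxs
        · exact hcl _ (hcl _ hxs)
        · exact hcl _ (hcl _ (hcl _ hxs))
      -- none of the orbit elements is fixed by f ∘ f
      have hnofix : ∀ y ∈ O, ¬ f (f y) = y := by
        intro y hy
        simp only [hO, Finset.mem_insert, Finset.mem_singleton] at hy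
        rcases hy with rfl | rfl | rfl | rfl
        · exact hx
        · exact fun h => hx (finj h)
        · intro h; rw [h4] at h; exact hx h.symm
        · intro h
          have : f (f (f (f (f x)))) = f (f (f x)) := by rw [h]
          rw [h4] at this
          exact d13 this
      -- the complement is closed under f
      have hcl' : ∀ y ∈ s \ O, f y ∈ s \ O := by
        intro y hy
        rw [Finset.mem_sdiff] at hy ⊢
        refine ⟨hcl _ hy.1, fun hfy => hy.2 ?_⟩
        simp only [hO, Finset.mem_insert, Finset.mem_singleton] at hfy ⊢
        rcases hfy with h | h | h | h
        · right; right; right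
          have : f (f (f (f y))) = f (f (f x)) := by rw [h]
          rwa [h4] at this
        · exact Or.inl (finj h)
        · exact Or.inr (Or.inl (finj h))
        · exact Or.inr (Or.inr (Or.inl (finj h)))
      -- the filters agree
      have hfilt : s.filter (fun y => f (f y) = y) = (s \ O).filter (fun y => f (f y) = y) := by
        ext y
        simp only [Finset.mem_filter, Finset.mem_sdiff]
        constructor
        · rintro ⟨hys, hyf⟩
          exact ⟨⟨hys, fun hyO => hnofix y hyO hyf⟩, hyf⟩
        · rintro ⟨⟨hys, _⟩, hyf⟩
          exact ⟨hys, hyf⟩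
      have hcards : (s \ O).card = s.card - 4 := by
        rw [Finset.card_sdiff_of_subset hOsub, hOcard]
      have h4le : 4 ≤ s.card := hOcard ▸ Finset.card_le_card hOsub
      have hrec := ih (s \ O) (by omega) (fun y hy => hcl' y hy)
      rw [hfilt, ← hrec, hcards]
      omega


def pi4 : Fin 4 → Fin 4 := ![2, 3, 1, 0]

lemma pi4_pi4 : ∀ i, pi4 (pi4 i) = ![1, 0, 3, 2] i := by decide

lemma pi4_four : ∀ i, pi4 (pi4 (pi4 (pi4 i))) = i := by decide

variable {K : Type*} [Field K]

def Q (v : Fin 4 → K) : Prop := v 0 ^ 5 + v 1 ^ 5 - v 2 ^ 5 - v 3 ^ 5 = 0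

lemma comp_ne_zero {v : Fin 4 → K} (hv : v ≠ 0) : v ∘ pi4 ≠ 0 := by
  intro h
  apply hv
  funext i
  have key : ∀ j : Fin 4, pi4 (![3,2,0,1] j) = j := by decide
  have := congrFun h (![3, 2, 0, 1] i)
  simp only [Function.comp_apply, Pi.zero_apply] at this ⊢
  rwa [key i] at this

lemma smul_apply (c : Kˣ) (v : Fin 4 → K) (i : Fin 4) : (c • v) i = (c : K) * v i := rfl

lemma Q_smul (c : Kˣ) (v : Fin 4 → K) : Q (c • v) ↔ Q v := by
  unfold Q
  rw [smul_apply, smul_apply, smul_apply, smul_apply]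
  constructor
  · intro h
    have h5 : ((c : K)) ^ 5 ≠ 0 := pow_ne_zero _ c.ne_zero
    have : (c : K) ^ 5 * (v 0 ^ 5 + v 1 ^ 5 - v 2 ^ 5 - v 3 ^ 5) = 0 := by
      rw [← h]; ring
    rcases mul_eq_zero.mp this with h' | h'
    · exact absurd h' h5
    · exact h'
  · intro h
    have : ((c:K) * v 0) ^ 5 + ((c:K) * v 1) ^ 5 - ((c:K) * v 2) ^ 5 - ((c:K) * v 3) ^ 5
        = (c : K) ^ 5 * (v 0 ^ 5 + v 1 ^ 5 - v 2 ^ 5 - v 3 ^ 5) := by ring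
    rw [this, h, mul_zero]

lemma Q_comp (v : Fin 4 → K) : Q (v ∘ pi4) ↔ Q v := by
  unfold Q
  simp only [Function.comp_apply]
  rw [show pi4 0 = 2 from rfl, show pi4 1 = 3 from rfl, show pi4 2 = 1 from rfl,
    show pi4 3 = 0 from rfl]
  constructor <;> intro h <;> linear_combination -h

lemma exists_rep_eq (v : Fin 4 → K) (hv : v ≠ 0) :
    ∃ c : Kˣ, (mk K v hv).rep = c • v := by
  have h := (mk_rep (mk K v hv))
  rw [mk_eq_mk_iff] at h
  obtain ⟨a, ha⟩ := h
  exact ⟨a, ha.symm⟩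

lemma Q_rep_mk (v : Fin 4 → K) (hv : v ≠ 0) : Q ((mk K v hv).rep) ↔ Q v := by
  obtain ⟨c, hc⟩ := exists_rep_eq v hv
  rw [hc, Q_smul]

/-- The order-4 automorphism γ of ℙ³. -/
noncomputable def gam (P : ℙ K (Fin 4 → K)) : ℙ K (Fin 4 → K) :=
  mk K (P.rep ∘ pi4) (comp_ne_zero P.rep_nonzero)

lemma gam_mk (v : Fin 4 → K) (hv : v ≠ 0) :
    gam (mk K v hv) = mk K (v ∘ pi4) (comp_ne_zero hv) := by
  unfold gam
  obtain ⟨c, hc⟩ := exists_rep_eq v hv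
  rw [mk_eq_mk_iff]
  refine ⟨c, ?_⟩
  funext i
  simp only [smul_apply, Function.comp_apply]
  rw [congrFun hc (pi4 i), smul_apply]

lemma gam_def (P : ℙ K (Fin 4 → K)) :
    gam P = mk K (P.rep ∘ pi4) (comp_ne_zero P.rep_nonzero) := rfl

lemma mk_eq_iff (w : Fin 4 → K) (hw : w ≠ 0) (P : ℙ K (Fin 4 → K)) :
    mk K w hw = P ↔ ∃ c : Kˣ, c • P.rep = w := by
  conv_lhs => rw [← mk_rep P]
  rw [mk_eq_mk_iff]

lemma gam_gam (P : ℙ K (Fin 4 → K)) :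
    gam (gam P) = mk K (P.rep ∘ pi4 ∘ pi4)
      (comp_ne_zero (comp_ne_zero P.rep_nonzero)) := by
  conv_lhs => rw [gam_def P]
  rw [gam_mk]
  rfl

lemma gam_four (P : ℙ K (Fin 4 → K)) : gam (gam (gam (gam P))) = P := by
  conv_lhs => rw [gam_def P]
  rw [gam_mk, gam_mk, gam_mk, mk_eq_iff]
  refine ⟨1, ?_⟩
  funext i
  simp only [smul_apply, Units.val_one, one_mul, Function.comp_apply, pi4_four]

lemma Q_gam (P : ℙ K (Fin 4 → K)) : Q ((gam P).rep) ↔ Q P.rep := by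
  rw [gam_def, Q_rep_mk, Q_comp]

lemma gam_gam_eq_self_iff (P : ℙ K (Fin 4 → K)) :
    gam (gam P) = P ↔ ∃ c : Kˣ, (c : K) * P.rep 0 = P.rep 1 ∧ (c : K) * P.rep 1 = P.rep 0
      ∧ (c : K) * P.rep 2 = P.rep 3 ∧ (c : K) * P.rep 3 = P.rep 2 := by
  rw [gam_gam, mk_eq_iff]
  have e0 : (P.rep ∘ pi4 ∘ pi4) 1 = P.rep 0 := rfl
  have e1 : (P.rep ∘ pi4 ∘ pi4) 0 = P.rep 1 := rfl
  have e2 : (P.rep ∘ pi4 ∘ pi4) 3 = P.rep 2 := rfl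
  have e3 : (P.rep ∘ pi4 ∘ pi4) 2 = P.rep 3 := rfl
  constructor
  · rintro ⟨c, hc⟩
    refine ⟨c, ?_, ?_, ?_, ?_⟩
    · rw [← e1]; exact (congrFun hc 0)
    · rw [← e0]; exact (congrFun hc 1)
    · rw [← e3]; exact (congrFun hc 2)
    · rw [← e2]; exact (congrFun hc 3)
  · rintro ⟨c, h0, h1, h2, h3⟩
    refine ⟨c, ?_⟩
    funext j
    rw [smul_apply]
    fin_cases j
    · exact h0
    · exact h1
    · exact h2
    · exact h3


lemma gam_gam_mk (v : Fin 4 → K) (hv : v ≠ 0) :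
    gam (gam (mk K v hv)) = mk K (v ∘ pi4 ∘ pi4)
      (comp_ne_zero (comp_ne_zero hv)) := by
  rw [gam_mk, gam_mk]
  rfl

lemma fix_of_smul (v : Fin 4 → K) (hv : v ≠ 0) (c : Kˣ)
    (h : ∀ j, (c : K) * v j = v (pi4 (pi4 j))) :
    gam (gam (mk K v hv)) = mk K v hv := by
  rw [gam_gam_mk, mk_eq_mk_iff]
  exact ⟨c, funext fun j => h j⟩

variable (K) in
/-- the set of points of `S` fixed by `γ²`. -/
def FixSet : Type _ :=
  {x : {P : ℙ K (Fin 4 → K) // Q P.rep} // gam (gam x.1) = x.1}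

/-- package a good vector into a point of `FixSet`. -/
def pt (v : Fin 4 → K) (hv : v ≠ 0) (hQ : Q v)
    (hfix : gam (gam (mk K v hv)) = mk K v hv) : FixSet K :=
  ⟨⟨mk K v hv, (Q_rep_mk v hv).mpr hQ⟩, by
    have : (⟨mk K v hv, (Q_rep_mk v hv).mpr hQ⟩ :
        {P : ℙ K (Fin 4 → K) // Q P.rep}).1 = mk K v hv := rfl
    rw [this, hfix]⟩

lemma pt_inj_iff (v w : Fin 4 → K) (hv hw hQv hQw hfv hfw) :
    pt v hv hQv hfv = pt w hw hQw hfw ↔ ∃ c : Kˣ, c • w = v := by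
  rw [← mk_eq_mk_iff K v w hv hw]
  constructor
  · intro h
    exact congrArg (fun x : FixSet K => x.1.1) h
  · intro h
    apply Subtype.ext
    apply Subtype.ext
    exact h

lemma ne_zero_of_coord {v : Fin 4 → K} (i : Fin 4) (h : v i ≠ 0) : v ≠ 0 :=
  fun hv => h (by rw [hv]; rfl)

lemma coords_ne_zero (v : Fin 4 → K) (hv : v ≠ 0) :
    v 0 ≠ 0 ∨ v 1 ≠ 0 ∨ v 2 ≠ 0 ∨ v 3 ≠ 0 := by
  by_contra h
  push_neg at h
  obtain ⟨h0, h1, h2, h3⟩ := h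
  apply hv
  funext j
  fin_cases j <;> assumption


section vectors

def w1 (t : K) : Fin 4 → K := ![1, -1, t, -t]
def winf : Fin 4 → K := ![0, 0, 1, -1]
def w5 (b : K) : Fin 4 → K := ![1, 1, b, b]

lemma w1_ne (t : K) : w1 t ≠ 0 :=
  ne_zero_of_coord 0 (by simp [w1])
lemma winf_ne : (winf : Fin 4 → K) ≠ 0 :=
  ne_zero_of_coord 2 (by simp [winf])
lemma w5_ne (b : K) : w5 b ≠ 0 :=
  ne_zero_of_coord 0 (by simp [w5])

lemma w1_Q (t : K) : Q (w1 t) := by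
  unfold Q w1
  simp
  ring

lemma winf_Q : Q (winf : Fin 4 → K) := by
  unfold Q winf
  simp
  ring

lemma w5_Q (b : K) (hb : b ^ 5 = 1) : Q (w5 b) := by
  unfold Q w5
  simp [hb]

lemma w1_fix (t : K) : gam (gam (mk K (w1 t) (w1_ne t))) = mk K (w1 t) (w1_ne t) := by
  apply fix_of_smul _ _ (-1)
  intro j
  fin_cases j <;> simp [w1, pi4]

lemma winf_fix : gam (gam (mk K winf winf_ne)) = mk K (winf : Fin 4 → K) winf_ne := by
  apply fix_of_smul _ _ (-1)
  intro j
  fin_cases j <;> simp [winf, pi4]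

lemma w5_fix (b : K) : gam (gam (mk K (w5 b) (w5_ne b))) = mk K (w5 b) (w5_ne b) := by
  apply fix_of_smul _ _ 1
  intro j
  fin_cases j <;> simp [w5, pi4]

/-- parametrization of the fixed locus, odd characteristic. -/
noncomputable def PhiOdd : (K ⊕ Unit) ⊕ {b : K // b ^ 5 = 1} → FixSet K
  | .inl (.inl t) => pt (w1 t) (w1_ne t) (w1_Q t) (w1_fix t)
  | .inl (.inr _) => pt winf winf_ne winf_Q winf_fix
  | .inr b => pt (w5 b.1) (w5_ne b.1) (w5_Q b.1 b.2) (w5_fix b.1)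

lemma PhiOdd_inj (h2 : (2 : K) ≠ 0) : Function.Injective (PhiOdd (K := K)) := by
  have hne : (1 : K) ≠ -1 := by
    intro h
    apply h2
    linear_combination h
  rintro (t | u) (t' | u') h
  · rcases t with t | t <;> rcases t' with t' | t'
    · rw [PhiOdd, PhiOdd, pt_inj_iff] at h
      obtain ⟨c, hc⟩ := h
      have h0 := congrFun hc 0
      have h1 := congrFun hc 2
      simp [smul_apply, Units.smul_def, smul_eq_mul, w1] at h0 h1
      simp_all
    · rw [PhiOdd, PhiOdd, pt_inj_iff] at h
      obtain ⟨c, hc⟩ := h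
      have h0 := congrFun hc 0
      simp [smul_apply, Units.smul_def, smul_eq_mul, w1, winf] at h0
    · rw [PhiOdd, PhiOdd, pt_inj_iff] at h
      obtain ⟨c, hc⟩ := h
      have h0 := congrFun hc 0
      simp [smul_apply, Units.smul_def, smul_eq_mul, w1, winf] at h0
    · rfl
  · rcases t with t | t <;> rcases u' with ⟨b', hb'⟩
    · rw [PhiOdd, PhiOdd, pt_inj_iff] at h
      obtain ⟨c, hc⟩ := h
      have h0 := congrFun hc 0
      have h1 := congrFun hc 1
      simp [smul_apply, Units.smul_def, smul_eq_mul, w1, w5] at h0 h1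
      rw [h0] at h1
      exact absurd (congrArg Units.val h1) (by simpa using hne)
    · rw [PhiOdd, PhiOdd, pt_inj_iff] at h
      obtain ⟨c, hc⟩ := h
      have h0 := congrFun hc 0
      simp [smul_apply, Units.smul_def, smul_eq_mul, winf, w5] at h0
  · rcases u with ⟨b, hb⟩ <;> rcases t' with t' | t'
    · rw [PhiOdd, PhiOdd, pt_inj_iff] at h
      obtain ⟨c, hc⟩ := h
      have h0 := congrFun hc 0
      have h1 := congrFun hc 1
      simp [smul_apply, Units.smul_def, smul_eq_mul, w1, w5] at h0 h1
      rw [h0] at h1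
      simp only [Units.val_one, one_mul] at h1
      exact absurd h1 (by simpa using hne.symm)
    · rw [PhiOdd, PhiOdd, pt_inj_iff] at h
      obtain ⟨c, hc⟩ := h
      have h0 := congrFun hc 0
      simp [smul_apply, Units.smul_def, smul_eq_mul, winf, w5] at h0
  · rcases u with ⟨b, hb⟩; rcases u' with ⟨b', hb'⟩
    rw [PhiOdd, PhiOdd, pt_inj_iff] at h
    obtain ⟨c, hc⟩ := h
    have h0 := congrFun hc 0
    have h1 := congrFun hc 2
    simp [smul_apply, Units.smul_def, smul_eq_mul, w5] at h0 h1
    simp_all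


lemma PhiOdd_surj (h2 : (2 : K) ≠ 0) : Function.Surjective (PhiOdd (K := K)) := by
  rintro ⟨⟨P, hQ⟩, hfix⟩
  have hfix' : gam (gam P) = P := hfix
  rw [gam_gam_eq_self_iff] at hfix'
  obtain ⟨c, h0, h1, h2', h3⟩ := hfix'
  set v := P.rep with hv
  have hvne := P.rep_nonzero
  have hc2 : (c : K) * (c : K) = 1 := by
    rcases coords_ne_zero v hvne with h | h | h | h
    · have e : (c : K) * (c : K) * v 0 = v 0 := by rw [mul_assoc, h0, h1]
      have e' : (c : K) * (c : K) * v 0 = 1 * v 0 := by rw [e, one_mul]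
      exact mul_right_cancel₀ h e'
    · have e : (c : K) * (c : K) * v 1 = v 1 := by rw [mul_assoc, h1, h0]
      have e' : (c : K) * (c : K) * v 1 = 1 * v 1 := by rw [e, one_mul]
      exact mul_right_cancel₀ h e'
    · have e : (c : K) * (c : K) * v 2 = v 2 := by rw [mul_assoc, h2', h3]
      have e' : (c : K) * (c : K) * v 2 = 1 * v 2 := by rw [e, one_mul]
      exact mul_right_cancel₀ h e'
    · have e : (c : K) * (c : K) * v 3 = v 3 := by rw [mul_assoc, h3, h2']
      have e' : (c : K) * (c : K) * v 3 = 1 * v 3 := by rw [e, one_mul]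
      exact mul_right_cancel₀ h e'
  rcases mul_self_eq_one_iff.mp hc2 with hc1 | hcm1
  · -- c = 1 : the point is [1,1,b,b] with b⁵ = 1
    rw [hc1, one_mul] at h0 h2'
    have hQ' : v 0 ^ 5 + v 1 ^ 5 - v 2 ^ 5 - v 3 ^ 5 = 0 := hQ
    rw [← h0, ← h2'] at hQ'
    have h55 : v 0 ^ 5 = v 2 ^ 5 := by
      apply mul_left_cancel₀ h2
      linear_combination hQ'
    have hv0 : v 0 ≠ 0 := by
      intro h
      have h2z : v 2 = 0 := by
        have : v 2 ^ 5 = 0 := by rw [← h55, h, zero_pow] ; norm_num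
        exact pow_eq_zero_iff (by norm_num) |>.mp this
      rcases coords_ne_zero v hvne with hh | hh | hh | hh
      · exact hh h
      · exact hh (by rw [← h0, h])
      · exact hh h2z
      · exact hh (by rw [← h2', h2z])
    have hb : ((v 0)⁻¹ * v 2) ^ 5 = 1 := by
      rw [mul_pow, inv_pow, ← h55, inv_mul_cancel₀ (pow_ne_zero _ hv0)]
    refine ⟨.inr ⟨(v 0)⁻¹ * v 2, hb⟩, ?_⟩
    apply Subtype.ext
    apply Subtype.ext
    show mk K (w5 ((v 0)⁻¹ * v 2)) _ = P
    rw [mk_eq_iff]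
    refine ⟨Units.mk0 (v 0)⁻¹ (inv_ne_zero hv0), ?_⟩
    funext j
    fin_cases j <;>
      simp [w5, Units.smul_def, smul_eq_mul, ← hv, ← h0, ← h2', hv0]
  · -- c = -1 : the point is [a,-a,b,-b]
    rw [hcm1] at h0 h2'
    have hv1 : v 1 = -(v 0) := by rw [← h0]; ring
    have hv3 : v 3 = -(v 2) := by rw [← h2']; ring
    by_cases hv0 : v 0 = 0
    · have hv2 : v 2 ≠ 0 := by
        intro h
        rcases coords_ne_zero v hvne with hh | hh | hh | hh
        · exact hh hv0
        · exact hh (by rw [hv1, hv0, neg_zero])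
        · exact hh h
        · exact hh (by rw [hv3, h, neg_zero])
      refine ⟨.inl (.inr ()), ?_⟩
      apply Subtype.ext
      apply Subtype.ext
      show mk K winf _ = P
      rw [mk_eq_iff]
      refine ⟨Units.mk0 (v 2)⁻¹ (inv_ne_zero hv2), ?_⟩
      funext j
      fin_cases j <;>
        simp [winf, Units.smul_def, smul_eq_mul, ← hv, hv0, hv1, hv3, hv2]
    · refine ⟨.inl (.inl ((v 0)⁻¹ * v 2)), ?_⟩
      apply Subtype.ext
      apply Subtype.ext
      show mk K (w1 ((v 0)⁻¹ * v 2)) _ = P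
      rw [mk_eq_iff]
      refine ⟨Units.mk0 (v 0)⁻¹ (inv_ne_zero hv0), ?_⟩
      funext j
      fin_cases j <;>
        simp [w1, Units.smul_def, smul_eq_mul, ← hv, hv1, hv3, hv0] <;> ring


section char2

def u1 (t : K) : Fin 4 → K := ![1, 1, t, t]
def uinf : Fin 4 → K := ![0, 0, 1, 1]

lemma u1_ne (t : K) : u1 t ≠ 0 := ne_zero_of_coord 0 (by simp [u1])
lemma uinf_ne : (uinf : Fin 4 → K) ≠ 0 := ne_zero_of_coord 2 (by simp [uinf])

lemma u1_Q (h2 : (2 : K) = 0) (t : K) : Q (u1 t) := by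
  unfold Q u1
  simp
  linear_combination (1 - t ^ 5) * h2

lemma uinf_Q (h2 : (2 : K) = 0) : Q (uinf : Fin 4 → K) := by
  unfold Q uinf
  simp
  linear_combination -h2

lemma u1_fix (t : K) : gam (gam (mk K (u1 t) (u1_ne t))) = mk K (u1 t) (u1_ne t) := by
  apply fix_of_smul _ _ 1
  intro j
  fin_cases j <;> simp [u1, pi4]

lemma uinf_fix : gam (gam (mk K uinf uinf_ne)) = mk K (uinf : Fin 4 → K) uinf_ne := by
  apply fix_of_smul _ _ 1
  intro j
  fin_cases j <;> simp [uinf, pi4]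

/-- parametrization of the fixed locus, characteristic two. -/
noncomputable def PhiTwo (h2 : (2 : K) = 0) : K ⊕ Unit → FixSet K
  | .inl t => pt (u1 t) (u1_ne t) (u1_Q h2 t) (u1_fix t)
  | .inr _ => pt uinf uinf_ne (uinf_Q h2) uinf_fix

lemma PhiTwo_inj (h2 : (2 : K) = 0) : Function.Injective (PhiTwo h2) := by
  rintro (t | u) (t' | u') h
  · rw [PhiTwo, PhiTwo, pt_inj_iff] at h
    obtain ⟨c, hc⟩ := h
    have h0 := congrFun hc 0
    have h1 := congrFun hc 2
    simp [smul_apply, Units.smul_def, smul_eq_mul, u1] at h0 h1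
    simp_all
  · rw [PhiTwo, PhiTwo, pt_inj_iff] at h
    obtain ⟨c, hc⟩ := h
    have h0 := congrFun hc 0
    simp [smul_apply, Units.smul_def, smul_eq_mul, u1, uinf] at h0
  · rw [PhiTwo, PhiTwo, pt_inj_iff] at h
    obtain ⟨c, hc⟩ := h
    have h0 := congrFun hc 0
    simp [smul_apply, Units.smul_def, smul_eq_mul, u1, uinf] at h0
  · rfl

lemma PhiTwo_surj (h2 : (2 : K) = 0) : Function.Surjective (PhiTwo h2) := by
  rintro ⟨⟨P, hQ⟩, hfix⟩
  have hfix' : gam (gam P) = P := hfix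
  rw [gam_gam_eq_self_iff] at hfix'
  obtain ⟨c, h0, h1, h2', h3⟩ := hfix'
  set v := P.rep with hv
  have hvne := P.rep_nonzero
  have hc2 : (c : K) * (c : K) = 1 := by
    rcases coords_ne_zero v hvne with h | h | h | h
    · have e : (c : K) * (c : K) * v 0 = v 0 := by rw [mul_assoc, h0, h1]
      have e' : (c : K) * (c : K) * v 0 = 1 * v 0 := by rw [e, one_mul]
      exact mul_right_cancel₀ h e'
    · have e : (c : K) * (c : K) * v 1 = v 1 := by rw [mul_assoc, h1, h0]
      have e' : (c : K) * (c : K) * v 1 = 1 * v 1 := by rw [e, one_mul]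
      exact mul_right_cancel₀ h e'
    · have e : (c : K) * (c : K) * v 2 = v 2 := by rw [mul_assoc, h2', h3]
      have e' : (c : K) * (c : K) * v 2 = 1 * v 2 := by rw [e, one_mul]
      exact mul_right_cancel₀ h e'
    · have e : (c : K) * (c : K) * v 3 = v 3 := by rw [mul_assoc, h3, h2']
      have e' : (c : K) * (c : K) * v 3 = 1 * v 3 := by rw [e, one_mul]
      exact mul_right_cancel₀ h e'
  have hc1 : (c : K) = 1 := by
    have hsq : ((c : K) - 1) ^ 2 = 0 := by
      linear_combination hc2 + (1 - (c : K)) * h2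
    have := pow_eq_zero_iff (n := 2) (by norm_num) |>.mp hsq
    exact sub_eq_zero.mp this
  rw [hc1, one_mul] at h0 h2'
  by_cases hv0 : v 0 = 0
  · have hv2 : v 2 ≠ 0 := by
      intro h
      rcases coords_ne_zero v hvne with hh | hh | hh | hh
      · exact hh hv0
      · exact hh (by rw [← h0, hv0])
      · exact hh h
      · exact hh (by rw [← h2', h])
    refine ⟨.inr (), ?_⟩
    apply Subtype.ext
    apply Subtype.ext
    show mk K uinf _ = P
    rw [mk_eq_iff]
    refine ⟨Units.mk0 (v 2)⁻¹ (inv_ne_zero hv2), ?_⟩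
    funext j
    fin_cases j <;>
      simp [uinf, Units.smul_def, smul_eq_mul, ← hv, hv0, ← h0, ← h2', hv2]
  · refine ⟨.inl ((v 0)⁻¹ * v 2), ?_⟩
    apply Subtype.ext
    apply Subtype.ext
    show mk K (u1 ((v 0)⁻¹ * v 2)) _ = P
    rw [mk_eq_iff]
    refine ⟨Units.mk0 (v 0)⁻¹ (inv_ne_zero hv0), ?_⟩
    funext j
    fin_cases j <;>
      simp [u1, Units.smul_def, smul_eq_mul, ← hv, ← h0, ← h2', hv0]

end char2

end vectors


theorem nat_card_mod_four {X : Type*} [Finite X] (f : X → X)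
    (h4 : ∀ x, f (f (f (f x))) = x) :
    Nat.card X % 4 = Nat.card {x : X // f (f x) = x} % 4 := by
  classical
  cases nonempty_fintype X
  rw [Nat.card_eq_fintype_card, Nat.card_eq_fintype_card, Fintype.card_subtype]
  exact card_mod_four_eq f h4

lemma card_fifth_roots [Fintype K] :
    Nat.card {b : K // b ^ 5 = 1} = 1 ∨ Nat.card {b : K // b ^ 5 = 1} = 5 := by
  have hcard : Nat.card {b : K // b ^ 5 = 1}
      = Nat.card (MonoidHom.ker (powMonoidHom 5 : Kˣ →* Kˣ)) := by
    apply Nat.card_congr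
    refine ⟨fun b => ⟨Units.mk0 b.1 (fun h => one_ne_zero (α := K) (by rw [← b.2, h]; simp)), ?_⟩,
        fun u => ⟨((u : Kˣ) : K), ?_⟩, ?_, ?_⟩
    · rw [MonoidHom.mem_ker]
      ext
      simp [powMonoidHom]
      exact b.2
    · have hu := u.2
      rw [MonoidHom.mem_ker] at hu
      have := congrArg (Units.val) hu
      simpa [powMonoidHom] using this
    · intro b
      apply Subtype.ext
      rfl
    · intro u
      apply Subtype.ext
      apply Units.ext
      rfl
  rw [hcard]
  set H := MonoidHom.ker (powMonoidHom 5 : Kˣ →* Kˣ)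
  obtain ⟨g, hg⟩ := IsCyclic.exists_generator (α := H)
  have hg5 : g ^ 5 = 1 := by
    apply Subtype.ext
    have := g.2
    rw [MonoidHom.mem_ker] at this
    simpa [powMonoidHom] using this
  have hdvd : Nat.card H ∣ 5 := by
    rw [← orderOf_eq_card_of_forall_mem_zpowers hg]
    exact orderOf_dvd_of_pow_eq_one hg5
  exact (Nat.prime_five).eq_one_or_self_of_dvd _ hdvd

end FQaux


/-- For `p ≠ 5` prime and `q = pʳ`, the Fermat quintic surface
`S = {x₀⁵ + x₁⁵ − x₃⁵ − x₄⁵ = 0} ⊂ ℙ³` over `F_q` satisfies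
`#S(F_q) ≡ 1 + q + q² (mod 4)`. -/
theorem fermat_quintic_points_mod_four (p r q : ℕ) (hp : p.Prime) (hp5 : p ≠ 5)
    (hr : 0 < r) (hq : q = p ^ r)
    (K : Type*) [Field K] [Fintype K] (hK : Fintype.card K = q) :
    Nat.card {P : Projectivization K (Fin 4 → K) //
        (P.rep 0) ^ 5 + (P.rep 1) ^ 5 - (P.rep 2) ^ 5 - (P.rep 3) ^ 5 = 0} % 4 =
      (1 + q + q ^ 2) % 4 := by
  classical
  open FQaux in
  show Nat.card {P : ℙ K (Fin 4 → K) // FQaux.Q P.rep} % 4 = (1 + q + q ^ 2) % 4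
  haveI : Finite (ℙ K (Fin 4 → K)) := Quotient.finite _
  -- the characteristic of K is p
  have hcharp : ringChar K = p := by
    obtain ⟨n, hpr, hcard⟩ := FiniteField.card K (ringChar K)
    have hdvd : ringChar K ∣ p ^ r := by
      rw [← hq, ← hK, hcard]
      exact dvd_pow_self _ n.pos.ne'
    have := hpr.dvd_of_dvd_pow hdvd
    rcases (Nat.prime_dvd_prime_iff_eq hpr hp).mp this with h
    exact h
  haveI hcharK : CharP K p := hcharp ▸ ringChar.charP K
  -- the order-4 automorphism acting on S
  set S := {P : ℙ K (Fin 4 → K) // FQaux.Q P.rep} with hS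
  let fS : S → S := fun x => ⟨FQaux.gam x.1, (FQaux.Q_gam x.1).mpr x.2⟩
  have h4 : ∀ x, fS (fS (fS (fS x))) = x := fun x => Subtype.ext (FQaux.gam_four x.1)
  have key := FQaux.nat_card_mod_four fS h4
  have hfixcard : Nat.card {x : S // fS (fS x) = x} = Nat.card (FQaux.FixSet K) := by
    apply Nat.card_congr
    exact Equiv.subtypeEquivRight fun x => Subtype.ext_iff
  rw [key, hfixcard]
  by_cases hp2 : p = 2
  · -- characteristic 2
    have h2 : (2 : K) = 0 := by
      have := (CharP.cast_eq_zero_iff K p 2).mpr (by rw [hp2])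
      simpa using this
    have hbij : Function.Bijective (FQaux.PhiTwo h2) :=
      ⟨FQaux.PhiTwo_inj h2, FQaux.PhiTwo_surj h2⟩
    rw [← Nat.card_eq_of_bijective _ hbij, Nat.card_sum, Nat.card_eq_fintype_card, hK,
      Nat.card_unique]
    have hq4 : 4 ∣ q ^ 2 := by
      rw [hq, hp2, ← pow_mul]
      have : (2 : ℕ) ^ 2 ∣ 2 ^ (r * 2) := pow_dvd_pow 2 (by omega)
      simpa using this
    obtain ⟨k, hk⟩ := hq4
    omega
  · -- odd characteristic
    have h2 : (2 : K) ≠ 0 := by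
      intro h
      have := (CharP.cast_eq_zero_iff K p 2).mp (by simpa using h)
      exact hp2 ((Nat.prime_dvd_prime_iff_eq hp Nat.prime_two).mp this)
    have hbij : Function.Bijective (FQaux.PhiOdd (K := K)) :=
      ⟨FQaux.PhiOdd_inj h2, FQaux.PhiOdd_surj h2⟩
    rw [← Nat.card_eq_of_bijective _ hbij, Nat.card_sum, Nat.card_sum,
      Nat.card_eq_fintype_card, hK, Nat.card_unique]
    have hd := FQaux.card_fifth_roots (K := K)
    have hqodd : Odd q := by
      rw [hq]
      exact (hp.odd_of_ne_two hp2).pow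
    obtain ⟨k, hk⟩ := hqodd
    have hq2 : q ^ 2 = 4 * (k * k + k) + 1 := by rw [hk]; ring
    rcases hd with h | h <;> rw [h] <;> omega
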